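/- arXiv:2502.12738 — 2 statements merged into one kernel-verified Lean document; each statement's English description precedes it below -/
import Mathlib

section
/- Set Δ* = θp − θq and, for Δ ∈ ℝ^k satisfying the integrability conditions that x ↦ ⟨Δ, t(x)⟩ and x ↦ ⟨Δ*, t(x)⟩ are integrable with respect to the measure p·dν and that N(Δ; q) := ∫ q(x)·exp(⟨Δ, t(x)⟩) dν(x) < ∞, define the population KLIEP loss ℓ_pop(Δ) = −∫ ⟨Δ, t(x)⟩ p(x) dν(x) + log N(Δ; q). Then Δ* minimizes the population KLIEP loss: ℓ_pop(Δ*) ≤ ℓ_pop(Δ) for every such Δ. (Minimizer part of Proposition 1.) -/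
open scoped RealInnerProductSpace
open MeasureTheory

/-- The normalizing constant `Z(θ) = ∫ exp ⟪θ, t x⟫ dν(x)` of the exponential family. -/
noncomputable def expFamZ {Ω : Type*} [MeasurableSpace Ω] (ν : Measure Ω) {k : ℕ}
    (t : Ω → EuclideanSpace ℝ (Fin k)) (θ : EuclideanSpace ℝ (Fin k)) : ℝ :=
  ∫ x, Real.exp ⟪θ, t x⟫ ∂ν

/-- The exponential family density `f(x; θ) = exp ⟪θ, t x⟫ / Z(θ)`. -/
noncomputable def expFamDensity {Ω : Type*} [MeasurableSpace Ω] (ν : Measure Ω) {k : ℕ}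
    (t : Ω → EuclideanSpace ℝ (Fin k)) (θ : EuclideanSpace ℝ (Fin k)) (x : Ω) : ℝ :=
  Real.exp ⟪θ, t x⟫ / expFamZ ν t θ

/-- The KLIEP normalizer `N(Δ; q) = ∫ q(x)·exp ⟪Δ, t x⟫ dν(x)`, with `q = f(·; θq)`. -/
noncomputable def kliepN {Ω : Type*} [MeasurableSpace Ω] (ν : Measure Ω) {k : ℕ}
    (t : Ω → EuclideanSpace ℝ (Fin k)) (θq : EuclideanSpace ℝ (Fin k))
    (Δ : EuclideanSpace ℝ (Fin k)) : ℝ :=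
  ∫ x, expFamDensity ν t θq x * Real.exp ⟪Δ, t x⟫ ∂ν
/-- The population KLIEP loss
`ℓ_pop(Δ) = -∫ ⟪Δ, t x⟫ p(x) dν(x) + log N(Δ; q)`, with `p = f(·; θp)` and `q = f(·; θq)`. -/
noncomputable def kliepPopLoss {Ω : Type*} [MeasurableSpace Ω] (ν : Measure Ω) {k : ℕ}
    (t : Ω → EuclideanSpace ℝ (Fin k)) (θp θq : EuclideanSpace ℝ (Fin k))
    (Δ : EuclideanSpace ℝ (Fin k)) : ℝ :=
  -(∫ x, ⟪Δ, t x⟫ * expFamDensity ν t θp x ∂ν) + Real.log (kliepN ν t θq Δ)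

/-- Minimizer part of Proposition 1: `Δ* = θp - θq` minimizes the population KLIEP loss
over all `Δ` satisfying the integrability conditions. -/
theorem kliepPopLoss_min {Ω : Type*} [MeasurableSpace Ω] (ν : Measure Ω) {k : ℕ}
    (t : Ω → EuclideanSpace ℝ (Fin k)) (ht : Measurable t)
    (θp θq : EuclideanSpace ℝ (Fin k))
    (hip : Integrable (fun x => Real.exp ⟪θp, t x⟫) ν)
    (hiq : Integrable (fun x => Real.exp ⟪θq, t x⟫) ν)
    (hZp : 0 < expFamZ ν t θp) (hZq : 0 < expFamZ ν t θq) :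
    ∀ Δ : EuclideanSpace ℝ (Fin k),
      Integrable (fun x => ⟪Δ, t x⟫ * expFamDensity ν t θp x) ν →
      Integrable (fun x => ⟪θp - θq, t x⟫ * expFamDensity ν t θp x) ν →
      Integrable (fun x => expFamDensity ν t θq x * Real.exp ⟪Δ, t x⟫) ν →
      kliepPopLoss ν t θp θq (θp - θq) ≤ kliepPopLoss ν t θp θq Δ := by
  intro Δ hΔ hΔs hN
  have hZp' : expFamZ ν t θp ≠ 0 := hZp.ne'
  have hZq' : expFamZ ν t θq ≠ 0 := hZq.ne'
  set P : Ω → ℝ := expFamDensity ν t θp with hPdef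
  set g : Ω → ℝ := fun x => ⟪Δ - (θp - θq), t x⟫ with hgdef
  -- ν ≠ 0
  have hν : ν ≠ 0 := by
    intro h
    rw [expFamZ, h, integral_zero_measure] at hZp
    exact lt_irrefl 0 hZp
  -- basic integrabilities
  have hP : Integrable P ν := by
    have := hip.div_const (expFamZ ν t θp)
    exact this
  have hPnonneg : ∀ x, 0 ≤ P x := fun x =>
    div_nonneg (Real.exp_nonneg _) hZp.le
  have hPint : ∫ x, P x ∂ν = 1 := by
    simp only [hPdef, expFamDensity, integral_div]
    exact div_self hZp'
  have hgP : Integrable (fun x => g x * P x) ν := by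
    have h := hΔ.sub hΔs
    refine h.congr (Filter.EventuallyEq.of_eq ?_)
    funext x
    simp [hgdef, inner_sub_left, sub_mul]
  -- the key pointwise identity for the exp-tilted integrand
  have hptw : (fun x => Real.exp (g x) * P x)
      = fun x => (expFamDensity ν t θq x * Real.exp ⟪Δ, t x⟫)
          * (expFamZ ν t θq / expFamZ ν t θp) := by
    funext x
    simp only [hgdef, hPdef, expFamDensity, inner_sub_left, inner_sub_right]
    rw [Real.exp_sub, Real.exp_sub]
    field_simp
  have hE : Integrable (fun x => Real.exp (g x) * P x) ν := by
    rw [hptw]; exact hN.mul_const _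
  set M : ℝ := ∫ x, Real.exp (g x) * P x ∂ν with hMdef
  have hMN : M = kliepN ν t θq Δ * (expFamZ ν t θq / expFamZ ν t θp) := by
    rw [hMdef, hptw, integral_mul_const, kliepN]
  have hMpos : 0 < M := by
    rw [hMdef]
    rw [integral_pos_iff_support_of_nonneg_ae]
    · have : Function.support (fun x => Real.exp (g x) * P x) = Set.univ := by
        ext x
        simp [Function.support, hPdef, expFamDensity, (Real.exp_pos _).ne',
          div_ne_zero (Real.exp_pos _).ne' hZp']
      rw [this]
      exact Measure.measure_univ_pos.mpr hν
    · exact Filter.Eventually.of_forall fun x =>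
        mul_nonneg (Real.exp_nonneg _) (hPnonneg x)
    · exact hE
  have hNpos : 0 < kliepN ν t θq Δ := by
    have hc : 0 < expFamZ ν t θq / expFamZ ν t θp := div_pos hZq hZp
    nlinarith [hMN, hMpos]
  -- Gibbs inequality: ∫ g P ≤ log M
  have hgibbs : ∫ x, g x * P x ∂ν ≤ Real.log M := by
    have h1 : Integrable (fun x => g x * P x - Real.log M * P x) ν :=
      hgP.sub (hP.const_mul _)
    have hleft : Integrable (fun x => g x * P x - Real.log M * P x + P x) ν :=
      h1.add hP
    have hmono : ∫ x, (g x * P x - Real.log M * P x + P x) ∂ν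
        ≤ ∫ x, Real.exp (g x) * P x / M ∂ν := by
      refine integral_mono hleft (hE.div_const M) fun x => ?_
      have h1 : g x - Real.log M + 1 ≤ Real.exp (g x) / M := by
        have := Real.add_one_le_exp (g x - Real.log M)
        rwa [Real.exp_sub, Real.exp_log hMpos] at this
      have := mul_le_mul_of_nonneg_right h1 (hPnonneg x)
      calc g x * P x - Real.log M * P x + P x
          = (g x - Real.log M + 1) * P x := by ring
        _ ≤ Real.exp (g x) / M * P x := this
        _ = Real.exp (g x) * P x / M := by ring
    rw [integral_add h1 hP,
        integral_sub hgP (hP.const_mul (Real.log M)), integral_const_mul, hPint,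
        integral_div, ← hMdef, div_self hMpos.ne'] at hmono
    linarith
  -- compute N(Δ*) = Zp / Zq
  have hNs : kliepN ν t θq (θp - θq) = expFamZ ν t θp / expFamZ ν t θq := by
    rw [kliepN]
    rw [show expFamZ ν t θp / expFamZ ν t θq
        = ∫ x, Real.exp ⟪θp, t x⟫ / expFamZ ν t θq ∂ν by
      rw [integral_div]; rfl]
    congr 1
    funext x
    simp only [expFamDensity, inner_sub_left]
    rw [Real.exp_sub]
    field_simp
  -- assemble
  simp only [kliepPopLoss, hNs]
  have hsub : ∫ x, ⟪Δ, t x⟫ * P x ∂ν - ∫ x, ⟪θp - θq, t x⟫ * P x ∂ν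
      = ∫ x, g x * P x ∂ν := by
    rw [← integral_sub hΔ hΔs]
    congr 1; funext x; simp [hgdef, inner_sub_left, sub_mul]
  have hlogM : Real.log M = Real.log (kliepN ν t θq Δ)
      + Real.log (expFamZ ν t θq) - Real.log (expFamZ ν t θp) := by
    rw [hMN, Real.log_mul hNpos.ne' (div_pos hZq hZp).ne', Real.log_div hZq' hZp']
    ring
  rw [Real.log_div hZp' hZq']
  linarith [hgibbs, hsub.symm ▸ hgibbs]
end

section
/- Set Δ* = θp − θq and suppose additionally that the exponential family is identifiable in the sense that for every nonzero η ∈ ℝ^k the function x ↦ ⟨η, t(x)⟩ is not constant ν-almost everywhere. If Δ ∈ ℝ^k satisfies the integrability conditions that x ↦ ⟨Δ, t(x)⟩ and x ↦ ⟨Δ*, t(x)⟩ are integrable with respect to p·dν and N(Δ; q) < ∞, and if ℓ_pop(Δ) = ℓ_pop(Δ*), where ℓ_pop(Δ) = −∫ ⟨Δ, t(x)⟩ p(x) dν(x) + log N(Δ; q), then Δ = Δ*. That is, Δ* is the unique minimizer of the population KLIEP loss. (Uniqueness part of Proposition 1.) -/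
open scoped RealInnerProductSpace
open MeasureTheory
open scoped NNReal ENNReal

/-- Uniqueness part of Proposition 1: if the family is identifiable (no nonzero `η` makes
`⟪η, t x⟫` ν-a.e. constant), then `Δ* = θp - θq` is the unique minimizer of the population
KLIEP loss among `Δ` satisfying the integrability conditions. -/
theorem kliepPopLoss_unique_min {Ω : Type*} [MeasurableSpace Ω] (ν : Measure Ω) {k : ℕ}
    (t : Ω → EuclideanSpace ℝ (Fin k)) (ht : Measurable t)
    (θp θq : EuclideanSpace ℝ (Fin k))
    (hip : Integrable (fun x => Real.exp ⟪θp, t x⟫) ν)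
    (hiq : Integrable (fun x => Real.exp ⟪θq, t x⟫) ν)
    (hZp : 0 < expFamZ ν t θp) (hZq : 0 < expFamZ ν t θq)
    (hident : ∀ η : EuclideanSpace ℝ (Fin k), η ≠ 0 →
      ∀ c : ℝ, ¬ (∀ᵐ x ∂ν, ⟪η, t x⟫ = c)) :
    ∀ Δ : EuclideanSpace ℝ (Fin k),
      Integrable (fun x => ⟪Δ, t x⟫ * expFamDensity ν t θp x) ν →
      Integrable (fun x => ⟪θp - θq, t x⟫ * expFamDensity ν t θp x) ν →
      Integrable (fun x => expFamDensity ν t θq x * Real.exp ⟪Δ, t x⟫) ν →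
      kliepPopLoss ν t θp θq Δ = kliepPopLoss ν t θp θq (θp - θq) →
      Δ = θp - θq := by
  intro Δ hiΔ hiΔs hiN heq
  by_contra hne
  set Zp := expFamZ ν t θp with hZpdef
  set Zq := expFamZ ν t θq with hZqdef
  set p : Ω → ℝ := fun x => expFamDensity ν t θp x with hpdef
  have hppos : ∀ x, 0 < p x := fun x => div_pos (Real.exp_pos _) hZp
  have hinnerm : ∀ θ : EuclideanSpace ℝ (Fin k), Measurable fun x => ⟪θ, t x⟫ :=
    fun θ => ((continuous_const.inner continuous_id).measurable).comp ht
  have hpm : Measurable p := ((Real.measurable_exp.comp (hinnerm θp)).div_const _)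
  have hpint : Integrable p ν := hip.div_const _
  have hpint1 : ∫ x, p x ∂ν = 1 := by
    simp only [hpdef, expFamDensity, integral_div]
    have hz : (∫ a, Real.exp ⟪θp, t a⟫ ∂ν) = Zp := rfl
    rw [hz, div_self hZp.ne']
  -- the probability measure μ = p·ν
  set pN : Ω → ℝ≥0 := fun x => (p x).toNNReal with hpNdef
  have hpNm : Measurable pN := hpm.real_toNNReal
  set μ : Measure Ω := ν.withDensity (fun x => (pN x : ℝ≥0∞)) with hμdef
  have hμprob : IsProbabilityMeasure μ := by
    constructor
    rw [hμdef, withDensity_apply _ MeasurableSet.univ, Measure.restrict_univ]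
    have : ∀ x, ((pN x : ℝ≥0∞)) = ENNReal.ofReal (p x) := fun x => rfl
    simp_rw [this]
    rw [← ofReal_integral_eq_lintegral_ofReal hpint
      (Filter.Eventually.of_forall fun x => (hppos x).le), hpint1]
    simp
  -- the gap function g
  set g : Ω → ℝ := fun x => ⟪Δ, t x⟫ - ⟪θp - θq, t x⟫ with hgdef
  -- key pointwise identity
  have hkey : ∀ x, Real.exp (g x) * p x =
      (Zq / Zp) * (expFamDensity ν t θq x * Real.exp ⟪Δ, t x⟫) := by
    intro x
    simp only [hgdef, hpdef, expFamDensity, inner_sub_left, ← hZpdef, ← hZqdef,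
      Real.exp_sub, Real.exp_add]
    field_simp
  -- integrability of g and exp ∘ g with respect to μ
  have hiff : ∀ f : Ω → ℝ, Integrable f μ ↔ Integrable (fun x => f x * p x) ν := by
    intro f
    rw [hμdef, integrable_withDensity_iff hpNm.coe_nnreal_ennreal
      (Filter.Eventually.of_forall fun x => ENNReal.coe_lt_top)]
    have : ∀ x, ((pN x : ℝ≥0∞)).toReal = p x := fun x => by
      simp [hpNdef, Real.coe_toNNReal _ (hppos x).le]
    simp_rw [this]
  have hgint : Integrable g μ := by
    rw [hiff]
    have : (fun x => g x * p x) =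
        fun x => ⟪Δ, t x⟫ * expFamDensity ν t θp x - ⟪θp - θq, t x⟫ * expFamDensity ν t θp x := by
      funext x; simp [hgdef, hpdef, sub_mul]
    rw [this]
    exact hiΔ.sub hiΔs
  have hegint : Integrable (fun x => Real.exp (g x)) μ := by
    rw [hiff]
    have : (fun x => Real.exp (g x) * p x) =
        fun x => (Zq / Zp) * (expFamDensity ν t θq x * Real.exp ⟪Δ, t x⟫) := funext hkey
    rw [this]
    exact hiN.const_mul _
  -- transfer of integrals
  have hInt : ∀ f : Ω → ℝ, ∫ x, f x ∂μ = ∫ x, f x * p x ∂ν := by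
    intro f
    rw [hμdef, integral_withDensity_eq_integral_smul hpNm]
    congr 1; funext x
    simp [hpNdef, NNReal.smul_def, Real.coe_toNNReal _ (hppos x).le, mul_comm]
  -- the quantity I = ∫ exp g dμ
  set I : ℝ := ∫ x, Real.exp (g x) ∂μ with hIdef
  have hνne : ν ≠ 0 := by
    intro h
    rw [hZpdef, expFamZ, h, integral_zero_measure] at hZp
    exact lt_irrefl 0 hZp
  have hIpos : 0 < I := by
    rw [hIdef, hInt]
    have hint' : Integrable (fun x => Real.exp (g x) * p x) ν := (hiff _).mp hegint
    rw [integral_pos_iff_support_of_nonneg_ae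
      (Filter.Eventually.of_forall fun x => (mul_pos (Real.exp_pos _) (hppos x)).le) hint']
    have : (Function.support fun x => Real.exp (g x) * p x) = Set.univ := by
      ext x; simp [Function.support, (Real.exp_pos (g x)).ne', (hppos x).ne']
    rw [this]
    exact Measure.measure_univ_pos.mpr hνne
  -- compute kliepN Δ and kliepN Δ*
  have hNΔ : kliepN ν t θq Δ = (Zp / Zq) * I := by
    rw [hIdef, hInt, kliepN]
    have : ∀ x, expFamDensity ν t θq x * Real.exp ⟪Δ, t x⟫ =
        (Zp / Zq) * (Real.exp (g x) * p x) := by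
      intro x; rw [hkey x]; field_simp
    simp_rw [this]
    rw [integral_const_mul]
  have hNΔs : kliepN ν t θq (θp - θq) = Zp / Zq := by
    rw [kliepN]
    have : ∀ x, expFamDensity ν t θq x * Real.exp ⟪θp - θq, t x⟫ = (1 / Zq) * Real.exp ⟪θp, t x⟫ := by
      intro x
      simp only [expFamDensity, inner_sub_left, Real.exp_sub, ← hZqdef]
      field_simp
    simp_rw [this]
    rw [integral_const_mul, ← expFamZ, ← hZpdef]
    ring
  -- derive log I = ∫ g dμ
  have hlogI : Real.log I = ∫ x, g x ∂μ := by
    have h1 : ∫ x, g x ∂μ = (∫ x, ⟪Δ, t x⟫ * expFamDensity ν t θp x ∂ν)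
        - ∫ x, ⟪θp - θq, t x⟫ * expFamDensity ν t θp x ∂ν := by
      rw [hInt]
      have : (fun x => g x * p x) =
          fun x => ⟪Δ, t x⟫ * expFamDensity ν t θp x - ⟪θp - θq, t x⟫ * expFamDensity ν t θp x := by
        funext x; simp [hgdef, hpdef, sub_mul]
      rw [this, integral_sub hiΔ hiΔs]
    have h2 : Real.log (kliepN ν t θq Δ) = Real.log (Zp / Zq) + Real.log I := by
      rw [hNΔ, Real.log_mul (div_pos hZp hZq).ne' hIpos.ne']
    rw [kliepPopLoss, kliepPopLoss, h2, hNΔs] at heq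
    rw [h1]
    linarith
  -- Jensen equality
  have hexp : Real.exp (∫ x, g x ∂μ) = I := by
    rw [← hlogI, Real.exp_log hIpos]
  have := strictConvexOn_exp.ae_eq_const_or_map_average_lt
    Real.continuous_exp.continuousOn isClosed_univ
    (Filter.Eventually.of_forall fun x => Set.mem_univ (g x)) hgint hegint
  rw [average_eq_integral, average_eq_integral] at this
  rcases this with hconst | hlt
  · -- g is a.e. constant w.r.t. μ, hence w.r.t. ν
    set c : ℝ := ∫ x, g x ∂μ with hcdef
    have hν : ∀ᵐ x ∂ν, g x = c := by
      have := (ae_withDensity_iff (p := fun x => g x = c) hpNm.coe_nnreal_ennreal).mp hconst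
      filter_upwards [this] with x hx
      exact hx (by simp [hpNdef, Real.toNNReal_eq_zero, not_le, hppos x])
    refine hident (Δ - (θp - θq)) (sub_ne_zero.mpr hne) c ?_
    filter_upwards [hν] with x hx
    rw [inner_sub_left]
    exact hx
  · -- strict inequality contradicts equality
    rw [hexp] at hlt
    exact lt_irrefl I hlt
end
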